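/- If K₁ and K₂ are positive semidefinite kernels on a set X, then their pointwise product K(x,y) = K₁(x,y)·K₂(x,y) is also a positive semidefinite kernel on X. -/

import Mathlib

open Finset

/-- A positive semidefinite kernel: symmetric and all finite quadratic forms nonnegative. -/
def IsPSDKernel {X : Type*} (K : X → X → ℝ) : Prop :=
  (∀ x y, K x y = K y x) ∧
    ∀ (m : ℕ) (x : Fin m → X) (c : Fin m → ℝ),
      0 ≤ ∑ i, ∑ j, c i * c j * K (x i) (x j)

theorem psd_kernel_product {X : Type*} (K₁ K₂ : X → X → ℝ)
    (h₁ : IsPSDKernel K₁) (h₂ : IsPSDKernel K₂) :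
    IsPSDKernel (fun x y => K₁ x y * K₂ x y) := by
  obtain ⟨s₁, q₁⟩ := h₁
  obtain ⟨s₂, q₂⟩ := h₂
  refine ⟨fun x y => by simp only []; rw [s₁ x y, s₂ x y], fun m x c => ?_⟩
  -- the matrix of K₂ is positive semidefinite
  set M : Matrix (Fin m) (Fin m) ℝ := Matrix.of fun i j => K₂ (x i) (x j) with hM
  have hMpsd : M.PosSemidef := by
    apply Matrix.PosSemidef.of_dotProduct_mulVec_nonneg
    · ext i j
      simp [hM, Matrix.conjTranspose, s₂]
    · intro v
      have := q₂ m x v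
      simp only [dotProduct, Matrix.mulVec, dotProduct, star_trivial]
      calc (0:ℝ) ≤ ∑ i, ∑ j, v i * v j * K₂ (x i) (x j) := this
        _ = ∑ i, v i * ∑ j, M i j * v j := by
            simp_rw [Finset.mul_sum]
            refine Finset.sum_congr rfl fun i _ => Finset.sum_congr rfl fun j _ => ?_
            simp [hM]; ring
  open scoped MatrixOrder Matrix.Norms.L2Operator in
  obtain ⟨B, hB⟩ := CStarAlgebra.nonneg_iff_eq_star_mul_self.mp hMpsd.nonneg
  have hMentry : ∀ i j, K₂ (x i) (x j) = ∑ k, B k i * B k j := by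
    intro i j
    have h := congrFun (congrFun hB i) j
    simpa [hM, Matrix.mul_apply, Matrix.star_eq_conjTranspose, Matrix.conjTranspose_apply, mul_comm] using h
  show 0 ≤ ∑ i, ∑ j, c i * c j * (K₁ (x i) (x j) * K₂ (x i) (x j))
  calc (0:ℝ) ≤ ∑ k, ∑ i, ∑ j, (c i * B k i) * (c j * B k j) * K₁ (x i) (x j) :=
        Finset.sum_nonneg fun k _ => q₁ m x fun i => c i * B k i
    _ = ∑ i, ∑ j, c i * c j * (K₁ (x i) (x j) * K₂ (x i) (x j)) := by
        rw [Finset.sum_comm]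
        refine Finset.sum_congr rfl fun i _ => ?_
        rw [Finset.sum_comm]
        refine Finset.sum_congr rfl fun j _ => ?_
        rw [hMentry i j, Finset.mul_sum, Finset.mul_sum]
        refine Finset.sum_congr rfl fun k _ => ?_
        ring
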